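/- The graph H = K₅ × K_{9:2} (categorical product) has clique number 4 and chromatic number 5. -/

import Mathlib

/-- The Kneser graph `K_{n:k}`: vertices are the `k`-element subsets of an `n`-set,
adjacent iff disjoint. -/
def kneserGraph (n k : ℕ) : SimpleGraph {s : Finset (Fin n) // s.card = k} where
  Adj s t := s ≠ t ∧ Disjoint s.1 t.1
  symm := ⟨fun _ _ h => ⟨h.1.symm, h.2.symm⟩⟩
  loopless := ⟨fun _ h => h.1 rfl⟩

/-- The categorical (tensor) product of two simple graphs. -/
def catProd {α β : Type*} (G₁ : SimpleGraph α) (G₂ : SimpleGraph β) :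
    SimpleGraph (α × β) where
  Adj p q := G₁.Adj p.1 q.1 ∧ G₂.Adj p.2 q.2
  symm := ⟨fun _ _ h => ⟨h.1.symm, h.2.symm⟩⟩
  loopless := ⟨fun p h => G₁.loopless.irrefl p.1 h.1⟩

/-- Abbreviation for the product graph under consideration. -/
abbrev HG := catProd (SimpleGraph.completeGraph (Fin 5)) (kneserGraph 9 2)

instance : DecidableRel HG.Adj :=
  fun p q => inferInstanceAs (Decidable (p.1 ≠ q.1 ∧ (p.2 ≠ q.2 ∧ Disjoint p.2.1 q.2.1)))

/-- Helper to build a vertex of the Kneser graph from two elements. -/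
def mk2 (x y : Fin 9) (h : ({x,y} : Finset (Fin 9)).card = 2) :
    {s : Finset (Fin 9) // s.card = 2} := ⟨{x,y}, h⟩

set_option maxHeartbeats 1000000 in
set_option synthInstance.maxHeartbeats 400000 in
set_option synthInstance.maxSize 2000 in
lemma key5 : ∀ x0 x1 x2 x3 x4 ya yb : Fin 4,
    ya ≠ yb → ya ≠ x0 → ya ≠ x1 → ya ≠ x2 → ya ≠ x3 → ya ≠ x4 →
    yb ≠ x0 → yb ≠ x1 → yb ≠ x2 → yb ≠ x3 → yb ≠ x4 →
    x0 ≠ x1 → x1 ≠ x2 → x2 ≠ x3 → x3 ≠ x4 → x4 ≠ x0 → False := by decide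

/-- Any clique of `HG` has at most 4 vertices: the second coordinates are pairwise
disjoint 2-element subsets of a 9-element set. -/
lemma HG_clique_le (n : ℕ) (s : Finset (Fin 5 × {s : Finset (Fin 9) // s.card = 2}))
    (hs : HG.IsNClique n s) : n ≤ 4 := by
  classical
  set f : Fin 5 × {s : Finset (Fin 9) // s.card = 2} → Finset (Fin 9) := fun p => p.2.1 with hf
  have hinj : Set.InjOn f s := by
    intro p hp q hq hpq
    by_contra hne
    have hadj := hs.1 hp hq hne
    exact hadj.2.1 (Subtype.ext hpq)
  set t := s.image f with ht
  have hcard : t.card = n := by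
    rw [ht, Finset.card_image_of_injOn hinj, hs.2]
  have hdisj : ∀ x ∈ t, ∀ y ∈ t, x ≠ y → Disjoint x y := by
    intro x hx y hy hxy
    obtain ⟨p, hp, rfl⟩ := Finset.mem_image.mp hx
    obtain ⟨q, hq, rfl⟩ := Finset.mem_image.mp hy
    have hpq : p ≠ q := fun h => hxy (by rw [h])
    exact (hs.1 hp hq hpq).2.2
  have hbu : (t.biUnion id).card = ∑ x ∈ t, x.card := Finset.card_biUnion hdisj
  have hsum : ∑ x ∈ t, x.card = 2 * n := by
    have : ∀ x ∈ t, x.card = 2 := by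
      intro x hx
      obtain ⟨p, _, rfl⟩ := Finset.mem_image.mp hx
      exact p.2.2
    rw [Finset.sum_congr rfl this]
    simp [hcard, mul_comm]
  have hle : (t.biUnion id).card ≤ 9 := by
    have := Finset.card_le_card (Finset.subset_univ (t.biUnion id))
    simpa using this
  omega

/-- The graph `H = K₅ × K_{9:2}` has clique number 4 and chromatic number 5. -/
theorem cliqueNum_and_chromaticNumber_K5_prod_kneser :
    (catProd (SimpleGraph.completeGraph (Fin 5)) (kneserGraph 9 2)).cliqueNum = 4 ∧
    (catProd (SimpleGraph.completeGraph (Fin 5)) (kneserGraph 9 2)).chromaticNumber = 5 := by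
  constructor
  · -- clique number
    have hmem : (4 : ℕ) ∈ {n | ∃ s, HG.IsNClique n s} :=
      ⟨{(0, mk2 0 1 (by decide)), (1, mk2 2 3 (by decide)),
        (2, mk2 4 5 (by decide)), (3, mk2 6 7 (by decide))}, by decide⟩
    have hub : ∀ n ∈ {n | ∃ s, HG.IsNClique n s}, n ≤ 4 := by
      rintro n ⟨s, hs⟩
      exact HG_clique_le n s hs
    exact le_antisymm (csSup_le ⟨4, hmem⟩ hub) (le_csSup ⟨4, hub⟩ hmem)
  · -- chromatic number
    have h5 : HG.chromaticNumber ≤ (5 : ℕ) := by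
      refine SimpleGraph.Colorable.chromaticNumber_le ⟨SimpleGraph.Coloring.mk (fun p => p.1) ?_⟩
      intro p q hadj
      exact hadj.1
    have h4 : ¬ HG.Colorable 4 := by
      rintro ⟨C⟩
      -- a copy of the 5-chromatic graph C₅ ∨ K₂ inside HG
      let a : Fin 5 × {s : Finset (Fin 9) // s.card = 2} := (0, mk2 5 6 (by decide))
      let b : Fin 5 × {s : Finset (Fin 9) // s.card = 2} := (1, mk2 7 8 (by decide))
      let c0 : Fin 5 × {s : Finset (Fin 9) // s.card = 2} := (2, mk2 0 1 (by decide))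
      let c1 : Fin 5 × {s : Finset (Fin 9) // s.card = 2} := (3, mk2 2 3 (by decide))
      let c2 : Fin 5 × {s : Finset (Fin 9) // s.card = 2} := (2, mk2 0 4 (by decide))
      let c3 : Fin 5 × {s : Finset (Fin 9) // s.card = 2} := (3, mk2 1 2 (by decide))
      let c4 : Fin 5 × {s : Finset (Fin 9) // s.card = 2} := (4, mk2 3 4 (by decide))
      exact key5 (C c0) (C c1) (C c2) (C c3) (C c4) (C a) (C b)
        (C.valid (by decide)) (C.valid (by decide)) (C.valid (by decide))
        (C.valid (by decide)) (C.valid (by decide)) (C.valid (by decide))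
        (C.valid (by decide)) (C.valid (by decide)) (C.valid (by decide))
        (C.valid (by decide)) (C.valid (by decide)) (C.valid (by decide))
        (C.valid (by decide)) (C.valid (by decide)) (C.valid (by decide))
        (C.valid (by decide))
    refine le_antisymm h5 ?_
    by_contra hlt
    push_neg at hlt
    have htop : HG.chromaticNumber ≠ ⊤ := (hlt.trans_le le_top).ne
    have : HG.chromaticNumber ≤ (4 : ℕ) := by
      obtain ⟨m, hm⟩ := WithTop.ne_top_iff_exists.mp htop
      rw [← hm] at hlt ⊢
      have hm5 : m < 5 := WithTop.coe_lt_coe.mp hlt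
      exact WithTop.coe_le_coe.mpr (Nat.lt_succ_iff.mp hm5)
    exact h4 (SimpleGraph.chromaticNumber_le_iff_colorable.mp this)
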